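/- For every integer n ≥ 3, the coefficient of x^n in P_n equals 2^{n-2}, and |P_n(x)| ≤ 1 for all x ∈ [-1,1]; consequently the monic polynomial 2^{-(n-2)} P_n has supremum norm at most 2^{-(n-2)} on [-1,1]. -/
import Mathlib


open Finset Polynomial Real

noncomputable section

/-- Binomial coefficient `C(a, b)` for integer lower index, zero when `b < 0` or `b > a`. -/
def chooseZ (a : ℕ) (b : ℤ) : ℤ := if 0 ≤ b then (a.choose b.toNat : ℤ) else 0

/-- `f n k m p = ∑_{i=0}^{n} (-1)^i C(n,i) C(np+m-ip, n+k)`. -/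
def f (n : ℕ) (k : ℤ) (m p : ℕ) : ℤ :=
  ∑ i ∈ Finset.range (n + 1),
    (-1) ^ i * (n.choose i : ℤ) * chooseZ (n * p + m - i * p) ((n : ℤ) + k)

/-- The coefficients `c(n,k,m,p)`. -/
def c (n : ℕ) (k : ℤ) (m p : ℕ) : ℤ :=
  if 0 ≤ k ∧ k ≤ (n : ℤ) ∧ (n : ℤ) % 2 = k % 2 ∧ 2 * (m : ℤ) ≤ (n : ℤ) + k then
    (-1) ^ ((((n : ℤ) - k) / 2).toNat) *
      f ((((n : ℤ) + k - 2 * m) / 2).toNat) (((n : ℤ) - k) / 2) m p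
  else 0

/-- The polynomial `P_{n,m,p}(x) = ∑_{k=0}^n c(n,k,m,p) x^k`, as a real polynomial. -/
def P (n m p : ℕ) : Polynomial ℝ :=
  ∑ k ∈ Finset.range (n + 1), Polynomial.C ((c n (k : ℤ) m p : ℝ)) * Polynomial.X ^ k
lemma chooseZ_eq_zero (a : ℕ) (b : ℤ) (h : (a:ℤ) < b) : chooseZ a b = 0 := by
  unfold chooseZ
  split_ifs with h0
  · have : a < b.toNat := by omega
    simp [Nat.choose_eq_zero_of_lt this]
  · rfl

lemma chooseZ_pascal (a : ℕ) (b : ℤ) :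
    chooseZ (a+1) b = chooseZ a b + chooseZ a (b-1) := by
  unfold chooseZ
  rcases lt_trichotomy b 0 with h | h | h
  · rw [if_neg (by omega), if_neg (by omega), if_neg (by omega)]; ring
  · subst h
    rw [if_pos le_rfl, if_pos le_rfl, if_neg (by omega)]
    simp
  · rw [if_pos (by omega), if_pos (by omega), if_pos (by omega)]
    obtain ⟨t, rfl⟩ : ∃ t:ℕ, b = (t:ℤ)+1 := ⟨(b-1).toNat, by omega⟩
    have h1 : ((t:ℤ)+1).toNat = t+1 := by omega
    have h2 : ((t:ℤ)+1-1).toNat = t := by omega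
    rw [h1, h2, Nat.choose_succ_succ]
    push_cast; ring

lemma chooseZ_pascal2 (a : ℕ) (b : ℤ) :
    chooseZ (a+2) b = chooseZ a b + 2 * chooseZ a (b-1) + chooseZ a (b-2) := by
  rw [show a + 2 = (a+1)+1 from rfl, chooseZ_pascal, chooseZ_pascal, chooseZ_pascal,
    show b-1-1 = b-2 by ring]
  ring

lemma sum_choose_succ (N : ℕ) (g : ℕ → ℤ) :
    ∑ i ∈ range (N+2), ((N+1).choose i : ℤ) * g i
      = ∑ i ∈ range (N+1), (N.choose i : ℤ) * g i
      + ∑ i ∈ range (N+1), (N.choose i : ℤ) * g (i+1) := by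
  rw [Finset.sum_range_succ']
  have h1 : ∀ i ∈ range (N+1), ((N+1).choose (i+1) : ℤ) * g (i+1)
      = (N.choose i : ℤ) * g (i+1) + (N.choose (i+1) : ℤ) * g (i+1) := by
    intro i _
    rw [Nat.choose_succ_succ]; push_cast; ring
  rw [Finset.sum_congr rfl h1, Finset.sum_add_distrib]
  have h2 : ∑ i ∈ range (N+1), (N.choose (i+1) : ℤ) * g (i+1) + (N.choose 0 : ℤ) * g 0
      = ∑ i ∈ range (N+1), (N.choose i : ℤ) * g i := by
    rw [← Finset.sum_range_succ' (fun i => (N.choose i : ℤ) * g i) (N+1),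
      Finset.sum_range_succ]
    simp
  simp only [Nat.choose_zero_right, Nat.cast_one, one_mul] at h2 ⊢
  linarith

lemma f_succ (N : ℕ) (K : ℤ) :
    f (N+1) K 2 2 = 2 * f N K 2 2 + f N (K-1) 2 2 := by
  have key : ∀ (K' : ℤ), f N K' 2 2
      = ∑ i ∈ range (N+1), (N.choose i : ℤ) * ((-1)^i * chooseZ (N*2+2 - i*2) ((N:ℤ)+K')) := by
    intro K'
    unfold f
    exact Finset.sum_congr rfl (fun i _ => by ring)
  have e1 : f (N+1) K 2 2
      = ∑ i ∈ range (N+2), ((N+1).choose i : ℤ) *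
          ((-1)^i * chooseZ ((N+1)*2+2 - i*2) ((N:ℤ)+1+K)) := by
    unfold f
    apply Finset.sum_congr (by norm_num) (fun i _ => ?_)
    have : ((N+1:ℕ):ℤ) + K = (N:ℤ)+1+K := by push_cast; ring
    rw [this]; ring
  rw [e1, sum_choose_succ]
  have e2 : ∑ i ∈ range (N+1), (N.choose i : ℤ) *
        ((-1)^(i+1) * chooseZ ((N+1)*2+2 - (i+1)*2) ((N:ℤ)+1+K))
      = - ∑ i ∈ range (N+1), (N.choose i : ℤ) * ((-1)^i * chooseZ (N*2+2 - i*2) ((N:ℤ)+1+K)) := by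
    rw [← Finset.sum_neg_distrib]
    apply Finset.sum_congr rfl (fun i _ => ?_)
    have hnat : (N+1)*2+2 - (i+1)*2 = N*2+2 - i*2 := by omega
    rw [hnat, pow_succ]; ring
  have e3 : ∑ i ∈ range (N+1), (N.choose i : ℤ) *
        ((-1)^i * chooseZ ((N+1)*2+2 - i*2) ((N:ℤ)+1+K))
      = ∑ i ∈ range (N+1), ((N.choose i : ℤ) * ((-1)^i * chooseZ (N*2+2 - i*2) ((N:ℤ)+(K+1)))
        + 2 * ((N.choose i : ℤ) * ((-1)^i * chooseZ (N*2+2 - i*2) ((N:ℤ)+K)))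
        + (N.choose i : ℤ) * ((-1)^i * chooseZ (N*2+2 - i*2) ((N:ℤ)+(K-1)))) := by
    apply Finset.sum_congr rfl (fun i hi => ?_)
    simp only [Finset.mem_range] at hi
    have hnat : (N+1)*2+2 - i*2 = (N*2+2 - i*2) + 2 := by omega
    rw [hnat, chooseZ_pascal2,
      show (N:ℤ)+1+K-1 = (N:ℤ)+K by ring,
      show (N:ℤ)+1+K-2 = (N:ℤ)+(K-1) by ring,
      show (N:ℤ)+1+K = (N:ℤ)+(K+1) by ring]
    ring
  rw [e2, e3]
  simp only [Finset.sum_add_distrib, ← Finset.mul_sum]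
  rw [← key (K+1), ← key K, ← key (K-1)]
  have : ((N:ℤ)+1+K) = (N:ℤ)+(K+1) := by ring
  rw [this, ← key (K+1)]
  ring

lemma chooseZ_neg (a : ℕ) (b : ℤ) (h : b < 0) : chooseZ a b = 0 := by
  unfold chooseZ
  rw [if_neg (by omega)]

lemma f_big (N : ℕ) (K : ℤ) (h : (N:ℤ)+2 < K) : f N K 2 2 = 0 := by
  unfold f
  apply Finset.sum_eq_zero
  intro i hi
  simp only [Finset.mem_range] at hi
  rw [chooseZ_eq_zero _ _ (by omega), mul_zero]

lemma f_neg : ∀ (N : ℕ) (K : ℤ), K < 0 → f N K 2 2 = 0 := by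
  intro N
  induction N with
  | zero =>
    intro K hK
    unfold f
    rw [Finset.sum_range_one]
    rw [chooseZ_neg _ _ (by omega), mul_zero]
  | succ N ih =>
    intro K hK
    rw [f_succ, ih K hK, ih (K-1) (by omega)]
    ring

lemma f_zero : ∀ (N : ℕ), f N 0 2 2 = 2^N := by
  intro N
  induction N with
  | zero =>
    unfold f
    rw [Finset.sum_range_one]
    simp [chooseZ]
  | succ N ih =>
    rw [f_succ, ih, f_neg N (0-1) (by omega)]
    ring

lemma c_succ (n k : ℕ) (hn : 3 ≤ n) :
    c (n+2) ((k:ℤ)+1) 2 2 = 2 * c (n+1) (k:ℤ) 2 2 - c n ((k:ℤ)+1) 2 2 := by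
  by_cases hpar : (n + k) % 2 = 1
  · -- parity matches: n ≡ k+1 (mod 2)
    by_cases h1 : k + 1 ≤ n
    · -- all three live
      obtain ⟨N, hN⟩ : ∃ N, n + k = 2*N + 3 := ⟨(n+k-3)/2, by omega⟩
      obtain ⟨K, hK⟩ : ∃ K, n - k = 2*K + 1 := ⟨(n-k-1)/2, by omega⟩
      unfold c
      rw [if_pos (by constructor <;> omega), if_pos (by constructor <;> omega),
        if_pos (by constructor <;> omega)]
      rw [show ((((n+2:ℕ):ℤ) - ((k:ℤ)+1)) / 2) = (K:ℤ)+1 by omega,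
        show ((((n+2:ℕ):ℤ) + ((k:ℤ)+1) - 2*((2:ℕ):ℤ)) / 2).toNat = N+1 by omega,
        show ((((n+1:ℕ):ℤ) - (k:ℤ)) / 2) = (K:ℤ)+1 by omega,
        show ((((n+1:ℕ):ℤ) + (k:ℤ) - 2*((2:ℕ):ℤ)) / 2).toNat = N by omega,
        show (((n:ℤ) - ((k:ℤ)+1)) / 2) = (K:ℤ) by omega,
        show (((n:ℤ) + ((k:ℤ)+1) - 2*((2:ℕ):ℤ)) / 2).toNat = N by omega,
        show ((K:ℤ)+1).toNat = K+1 by omega,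
        show ((K:ℤ)).toNat = K by omega]
      have hf := f_succ N ((K:ℤ)+1)
      rw [show (K:ℤ)+1-1 = (K:ℤ) by ring] at hf
      rw [hf, pow_succ]
      ring
    · by_cases h2 : k = n + 1
      · subst h2
        obtain ⟨m, rfl⟩ : ∃ m, n = m + 3 := ⟨n - 3, by omega⟩
        unfold c
        rw [if_pos (by constructor <;> omega), if_pos (by constructor <;> omega),
          if_neg (by omega)]
        rw [show ((((m+3+2:ℕ):ℤ) - (((m+3+1:ℕ):ℤ)+1)) / 2) = 0 by omega,
          show ((((m+3+2:ℕ):ℤ) + (((m+3+1:ℕ):ℤ)+1) - 2*((2:ℕ):ℤ)) / 2).toNat = m+3 by omega,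
          show ((((m+3+1:ℕ):ℤ) - ((m+3+1:ℕ):ℤ)) / 2) = 0 by omega,
          show ((((m+3+1:ℕ):ℤ) + ((m+3+1:ℕ):ℤ) - 2*((2:ℕ):ℤ)) / 2).toNat = m+2 by omega,
          show ((0:ℤ)).toNat = 0 by rfl]
        rw [f_zero, f_zero]
        ring
      · unfold c
        rw [if_neg (by omega), if_neg (by omega), if_neg (by omega)]
        ring
  · unfold c
    rw [if_neg (by omega), if_neg (by omega), if_neg (by omega)]
    ring

lemma c_zero (n : ℕ) (hn : 3 ≤ n) : c (n+2) 0 2 2 = - c n 0 2 2 := by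
  by_cases hpar : n % 2 = 0
  · obtain ⟨M, rfl⟩ : ∃ M, n = 2*M + 4 := ⟨(n-4)/2, by omega⟩
    unfold c
    rw [if_pos (by constructor <;> omega), if_pos (by constructor <;> omega)]
    rw [show ((((2*M+4+2:ℕ):ℤ) - 0) / 2) = (M:ℤ)+3 by omega,
      show ((((2*M+4+2:ℕ):ℤ) + 0 - 2*((2:ℕ):ℤ)) / 2).toNat = M+1 by omega,
      show ((((2*M+4:ℕ):ℤ) - 0) / 2) = (M:ℤ)+2 by omega,
      show ((((2*M+4:ℕ):ℤ) + 0 - 2*((2:ℕ):ℤ)) / 2).toNat = M by omega,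
      show ((M:ℤ)+3).toNat = M+3 by omega,
      show ((M:ℤ)+2).toNat = M+2 by omega]
    have hf := f_succ M ((M:ℤ)+3)
    rw [show (M:ℤ)+3-1 = (M:ℤ)+2 by ring, f_big M ((M:ℤ)+3) (by omega)] at hf
    rw [hf]
    ring
  · unfold c
    rw [if_neg (by omega), if_neg (by omega)]
    ring

lemma c_eq_zero_of_gt (n m p : ℕ) (k : ℤ) (h : (n:ℤ) < k) : c n k m p = 0 := by
  unfold c
  rw [if_neg (by omega)]

lemma P_coeff (n m p k : ℕ) : (P n m p).coeff k = (c n (k:ℤ) m p : ℝ) := by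
  unfold P
  rw [Polynomial.finset_sum_coeff]
  simp only [Polynomial.coeff_C_mul, Polynomial.coeff_X_pow, mul_ite, mul_one, mul_zero]
  rw [Finset.sum_ite_eq (Finset.range (n+1)) k (fun j => ((c n (j:ℤ) m p : ℝ)))]
  split_ifs with h
  · rfl
  · rw [c_eq_zero_of_gt n m p k (by simp only [Finset.mem_range] at h; omega)]
    norm_num

lemma P_rec (n : ℕ) (hn : 3 ≤ n) :
    P (n+2) 2 2 = Polynomial.C 2 * X * P (n+1) 2 2 - P n 2 2 := by
  ext k
  rw [Polynomial.coeff_sub, mul_assoc, Polynomial.coeff_C_mul, P_coeff, P_coeff]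
  cases k with
  | zero =>
    rw [Polynomial.mul_coeff_zero, Polynomial.coeff_X_zero, zero_mul, mul_zero]
    have := c_zero n hn
    push_cast [this]
    ring
  | succ k =>
    rw [Polynomial.coeff_X_mul, P_coeff]
    have := c_succ n k hn
    push_cast [this]
    ring

lemma P_eval (n m p : ℕ) (x : ℝ) :
    (P n m p).eval x = ∑ k ∈ range (n+1), (c n (k:ℤ) m p : ℝ) * x^k := by
  unfold P
  rw [Polynomial.eval_finset_sum]
  simp

lemma evalP3 (x : ℝ) : (P 3 2 2).eval x = 2*x^3 - 2*x := by
  rw [P_eval]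
  rw [show (3+1) = 4 from rfl, Finset.sum_range_succ, Finset.sum_range_succ,
    Finset.sum_range_succ, Finset.sum_range_succ, Finset.sum_range_zero]
  rw [show c 3 ((0:ℕ):ℤ) 2 2 = 0 from by decide, show c 3 ((1:ℕ):ℤ) 2 2 = -2 from by decide,
    show c 3 ((2:ℕ):ℤ) 2 2 = 0 from by decide, show c 3 ((3:ℕ):ℤ) 2 2 = 2 from by decide]
  push_cast
  ring

lemma evalP4 (x : ℝ) : (P 4 2 2).eval x = 4*x^4 - 5*x^2 + 1 := by
  rw [P_eval]
  rw [show (4+1) = 5 from rfl, Finset.sum_range_succ, Finset.sum_range_succ,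
    Finset.sum_range_succ, Finset.sum_range_succ, Finset.sum_range_succ, Finset.sum_range_zero]
  rw [show c 4 ((0:ℕ):ℤ) 2 2 = 1 from by decide, show c 4 ((1:ℕ):ℤ) 2 2 = 0 from by decide,
    show c 4 ((2:ℕ):ℤ) 2 2 = -5 from by decide, show c 4 ((3:ℕ):ℤ) 2 2 = 0 from by decide,
    show c 4 ((4:ℕ):ℤ) 2 2 = 4 from by decide]
  push_cast
  ring

lemma P_trig : ∀ j : ℕ, ∀ θ : ℝ,
    (P (j+3) 2 2).eval (cos θ) = -(sin θ * sin (((j:ℝ)+2) * θ)) ∧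
    (P (j+4) 2 2).eval (cos θ) = -(sin θ * sin (((j:ℝ)+3) * θ)) := by
  intro j
  induction j with
  | zero =>
    intro θ
    constructor
    · rw [evalP3]
      push_cast
      rw [show ((0:ℝ)+2) * θ = 2*θ by ring, Real.sin_two_mul]
      linear_combination (2*Real.cos θ) * (Real.sin_sq_add_cos_sq θ)
    · rw [evalP4]
      push_cast
      rw [show ((0:ℝ)+3) * θ = 2*θ + θ by ring, Real.sin_add, Real.sin_two_mul,
        Real.cos_two_mul]
      linear_combination (4*Real.cos θ^2 - 1) * (Real.sin_sq_add_cos_sq θ)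
  | succ j ih =>
    intro θ
    constructor
    · push_cast
      rw [show j+1+3 = j+4 by ring, show ((j:ℝ)+1+2) = (j:ℝ)+3 by ring]
      exact_mod_cast (ih θ).2
    · rw [show j+1+4 = (j+3)+2 by ring, P_rec (j+3) (by omega)]
      rw [Polynomial.eval_sub, Polynomial.eval_mul, Polynomial.eval_mul, Polynomial.eval_C,
        Polynomial.eval_X, (ih θ).1, (ih θ).2]
      push_cast
      rw [show ((j:ℝ)+1+3)*θ = ((j:ℝ)+3)*θ + θ by ring, Real.sin_add,
        show ((j:ℝ)+2)*θ = ((j:ℝ)+3)*θ - θ by ring, Real.sin_sub]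
      ring

/-- For n ≥ 3, the coefficient of `x^n` in `P_n` is `2^{n-2}`, `|P_n(x)| ≤ 1`
on [-1,1], and hence the monic polynomial `2^{-(n-2)} P_n` has sup norm at most `2^{-(n-2)}`
on [-1,1]. -/
theorem statement5 (n : ℕ) (hn : 3 ≤ n) :
    (P n 2 2).coeff n = 2 ^ (n - 2) ∧
    (∀ x ∈ Set.Icc (-1 : ℝ) 1, |(P n 2 2).eval x| ≤ 1) ∧
    (∀ x ∈ Set.Icc (-1 : ℝ) 1,
      |(Polynomial.C (((2 : ℝ) ^ (n - 2))⁻¹) * P n 2 2).eval x| ≤ ((2 : ℝ) ^ (n - 2))⁻¹) := by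
  have hcoeff : (P n 2 2).coeff n = 2 ^ (n - 2) := by
    rw [P_coeff]
    have hc : c n ((n:ℕ):ℤ) 2 2 = 2^(n-2) := by
      unfold c
      rw [if_pos (by constructor <;> omega)]
      rw [show (((n:ℤ) - (n:ℕ)) / 2) = 0 by omega,
        show ((((n:ℤ) + ((n:ℕ):ℤ) - 2*((2:ℕ):ℤ)) / 2)).toNat = n-2 by omega,
        show ((0:ℤ)).toNat = 0 from rfl]
      rw [f_zero]
      ring
    rw [hc]
    push_cast
    ring
  have hbound : ∀ x ∈ Set.Icc (-1 : ℝ) 1, |(P n 2 2).eval x| ≤ 1 := by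
    intro x hx
    have hxc : Real.cos (Real.arccos x) = x := Real.cos_arccos hx.1 hx.2
    have ht := (P_trig (n-3) (Real.arccos x)).1
    rw [show n-3+3 = n by omega, hxc] at ht
    rw [ht, abs_neg, abs_mul]
    have h1 : |Real.sin (Real.arccos x)| ≤ 1 := abs_le.2 ⟨Real.neg_one_le_sin _, Real.sin_le_one _⟩
    have h2 : |Real.sin ((((n-3:ℕ):ℝ)+2) * Real.arccos x)| ≤ 1 :=
      abs_le.2 ⟨Real.neg_one_le_sin _, Real.sin_le_one _⟩
    calc |Real.sin (Real.arccos x)| * |Real.sin ((((n-3:ℕ):ℝ)+2) * Real.arccos x)|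
        ≤ 1 * 1 := mul_le_mul h1 h2 (abs_nonneg _) zero_le_one
      _ = 1 := by norm_num
  refine ⟨hcoeff, hbound, ?_⟩
  intro x hx
  rw [Polynomial.eval_mul, Polynomial.eval_C, abs_mul,
    abs_of_nonneg (by positivity : (0:ℝ) ≤ ((2:ℝ)^(n-2))⁻¹)]
  calc ((2:ℝ)^(n-2))⁻¹ * |(P n 2 2).eval x| ≤ ((2:ℝ)^(n-2))⁻¹ * 1 := by
        apply mul_le_mul_of_nonneg_left (hbound x hx) (by positivity)
    _ = ((2:ℝ)^(n-2))⁻¹ := by ring
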